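/- arXiv:1903.01265 — 3 statements merged into one kernel-verified Lean document; each statement's English description precedes it below -/
import Mathlib

section
/- For β > 0 and y = (y_1 < ⋯ < y_N) with y_j ∈ ℤ_{≥0}, the kernel Λ*_{N,β}(y, dx) = (Δ_N(x)/Δ_N(y)) · det(x_i^{y_j+β−1} e^{-x_i} / Γ(y_j+β))_{i,j=1}^N dx_1⋯dx_N integrates to 1 over the chamber W^N_{c,+} = {x ∈ ℝ_{≥0}^N : x_1 ≤ ⋯ ≤ x_N}. -/
open MeasureTheory Finset Polynomial

/-! ### Auxiliary lemmas -/

noncomputable def sgn {N : ℕ} (σ : Equiv.Perm (Fin N)) : ℝ := ((Equiv.Perm.sign σ : ℤ) : ℝ)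

lemma sgn_mul_self {N : ℕ} (σ : Equiv.Perm (Fin N)) : sgn σ * sgn σ = 1 := by
  unfold sgn
  rcases Int.units_eq_one_or (Equiv.Perm.sign σ) with h | h <;> rw [h] <;> norm_num

lemma det_mul_det_expand {N : ℕ} (f g : Fin N → ℝ → ℝ) (x : Fin N → ℝ) :
    (Matrix.of fun i j => f j (x i)).det * (Matrix.of fun i j => g j (x i)).det =
    ∑ τ : Equiv.Perm (Fin N), ∑ σ : Equiv.Perm (Fin N),
      (sgn τ * sgn σ) * ∏ i, (f (τ.symm i) (x i) * g (σ.symm i) (x i)) := by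
  rw [Matrix.det_apply', Matrix.det_apply', Finset.sum_mul_sum]
  refine Finset.sum_congr rfl fun τ _ => Finset.sum_congr rfl fun σ _ => ?_
  have h1 : ∏ i, (Matrix.of fun i j => f j (x i)) (τ i) i = ∏ i, f (τ.symm i) (x i) := by
    rw [← Equiv.prod_comp τ (fun i => f (τ.symm i) (x i))]
    simp
  have h2 : ∏ i, (Matrix.of fun i j => g j (x i)) (σ i) i = ∏ i, g (σ.symm i) (x i) := by
    rw [← Equiv.prod_comp σ (fun i => g (σ.symm i) (x i))]
    simp
  rw [h1, h2, Finset.prod_mul_distrib]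
  unfold sgn
  ring

lemma perm_double_sum_det {N : ℕ} (A : Matrix (Fin N) (Fin N) ℝ) :
    ∑ τ : Equiv.Perm (Fin N), ∑ σ : Equiv.Perm (Fin N),
        (sgn τ * sgn σ) * ∏ i, A (τ.symm i) (σ.symm i)
      = (N.factorial : ℝ) * A.det := by
  have key : ∀ τ : Equiv.Perm (Fin N),
      ∑ σ : Equiv.Perm (Fin N), (sgn τ * sgn σ) * ∏ i, A (τ.symm i) (σ.symm i) = A.det := by
    intro τ
    have hprod : ∀ σ : Equiv.Perm (Fin N),
        ∏ i, A (τ.symm i) (σ.symm i) = ∏ i, A i (σ.symm (τ i)) := by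
      intro σ
      rw [← Equiv.prod_comp τ (fun i => A (τ.symm i) (σ.symm i))]
      simp
    simp_rw [hprod]
    have := Fintype.sum_equiv ((Equiv.inv (Equiv.Perm (Fin N))).trans (Equiv.mulLeft τ))
      (fun ρ : Equiv.Perm (Fin N) => sgn ρ * ∏ i, A i (ρ i))
      (fun σ : Equiv.Perm (Fin N) => (sgn τ * sgn σ) * ∏ i, A i (σ.symm (τ i)))
      ?_
    · rw [← this, ← Matrix.det_transpose, Matrix.det_apply']
      refine Finset.sum_congr rfl fun ρ _ => ?_
      simp [Matrix.transpose_apply, sgn]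
    · intro ρ
      simp only [Equiv.trans_apply, Equiv.coe_mulLeft, Equiv.inv_apply]
      have h1 : ∀ i, ((τ * ρ⁻¹ : Equiv.Perm (Fin N)).symm) (τ i) = ρ i := by
        intro i
        have : (τ * ρ⁻¹ : Equiv.Perm (Fin N))⁻¹ = ρ * τ⁻¹ := by group
        rw [← Equiv.Perm.inv_def, this]
        simp [Equiv.Perm.mul_apply]
      simp_rw [h1]
      have hs : sgn τ * sgn (τ * ρ⁻¹) = sgn ρ := by
        unfold sgn
        rw [← Int.cast_mul, ← Units.val_mul, ← map_mul]
        have : τ * (τ * ρ⁻¹) = τ * τ * ρ⁻¹ := by group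
        rw [this]
        have h2 : Equiv.Perm.sign (τ * τ * ρ⁻¹)
            = Equiv.Perm.sign τ * Equiv.Perm.sign τ * Equiv.Perm.sign ρ⁻¹ := by
          simp [map_mul]
        rw [h2]
        rcases Int.units_eq_one_or (Equiv.Perm.sign τ) with h | h <;>
          rw [h] <;> simp
      rw [hs]
  rw [Finset.sum_congr rfl fun τ _ => key τ, Finset.sum_const, Finset.card_univ,
    Fintype.card_perm, Fintype.card_fin, nsmul_eq_mul]

lemma integrable_detdet {N : ℕ} {f g : Fin N → ℝ → ℝ}
    (h : ∀ j k, Integrable (fun t => f j t * g k t)) :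
    Integrable (fun x : Fin N → ℝ =>
      (Matrix.of fun i j => f j (x i)).det * (Matrix.of fun i j => g j (x i)).det) := by
  have hrw : (fun x : Fin N → ℝ =>
      (Matrix.of fun i j => f j (x i)).det * (Matrix.of fun i j => g j (x i)).det)
      = fun x => ∑ τ : Equiv.Perm (Fin N), ∑ σ : Equiv.Perm (Fin N),
      (sgn τ * sgn σ) * ∏ i, (f (τ.symm i) (x i) * g (σ.symm i) (x i)) :=
    funext fun x => det_mul_det_expand f g x
  rw [hrw]
  refine integrable_finset_sum _ fun τ _ => integrable_finset_sum _ fun σ _ => ?_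
  exact (Integrable.fintype_prod (f := fun i t => f (τ.symm i) t * g (σ.symm i) t)
    (fun i => h _ _)).const_mul _

/-- **Andréief identity**. -/
lemma andreief {N : ℕ} (f g : Fin N → ℝ → ℝ)
    (h : ∀ j k, Integrable (fun t => f j t * g k t)) :
    ∫ x : Fin N → ℝ,
        (Matrix.of fun i j => f j (x i)).det * (Matrix.of fun i j => g j (x i)).det
      = (N.factorial : ℝ) * (Matrix.of fun j k => ∫ t, f j t * g k t).det := by
  have hrw : (fun x : Fin N → ℝ =>
      (Matrix.of fun i j => f j (x i)).det * (Matrix.of fun i j => g j (x i)).det)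
      = fun x => ∑ τ : Equiv.Perm (Fin N), ∑ σ : Equiv.Perm (Fin N),
      (sgn τ * sgn σ) * ∏ i, (f (τ.symm i) (x i) * g (σ.symm i) (x i)) :=
    funext fun x => det_mul_det_expand f g x
  rw [hrw]
  rw [integral_finset_sum _ (fun τ _ => integrable_finset_sum _ fun σ _ =>
    (Integrable.fintype_prod (f := fun i t => f (τ.symm i) t * g (σ.symm i) t)
      (fun i => h _ _)).const_mul _)]
  have step : ∀ τ : Equiv.Perm (Fin N),
      ∫ x : Fin N → ℝ, ∑ σ : Equiv.Perm (Fin N),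
        (sgn τ * sgn σ) * ∏ i, (f (τ.symm i) (x i) * g (σ.symm i) (x i))
      = ∑ σ : Equiv.Perm (Fin N), (sgn τ * sgn σ) *
          ∏ i, (Matrix.of fun j k => ∫ t, f j t * g k t) (τ.symm i) (σ.symm i) := by
    intro τ
    rw [integral_finset_sum _ (fun σ _ =>
      (Integrable.fintype_prod (f := fun i t => f (τ.symm i) t * g (σ.symm i) t)
        (fun i => h _ _)).const_mul _)]
    refine Finset.sum_congr rfl fun σ _ => ?_
    rw [integral_const_mul]
    congr 1
    exact MeasureTheory.integral_fintype_prod_eq_prod (ι := Fin N)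
      (fun i t => f (τ.symm i) t * g (σ.symm i) t)
  simp_rw [step]
  exact perm_double_sum_det _

/-! ### Gamma-moment lemmas -/

lemma mom_integrableOn {z : ℝ} (hz : 0 < z) (k : ℕ) :
    IntegrableOn (fun t : ℝ => t ^ k * (t ^ (z - 1) * Real.exp (-t))) (Set.Ioi 0) := by
  refine (Real.GammaIntegral_convergent (s := z + k) (by positivity)).congr_fun ?_ measurableSet_Ioi
  intro t ht
  have ht' : (0:ℝ) < t := ht
  simp only []
  rw [show z + (k:ℝ) - 1 = (k:ℝ) + (z - 1) by ring, Real.rpow_add ht', Real.rpow_natCast]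
  ring

lemma Gamma_add_nat {z : ℝ} (hz : 0 < z) (k : ℕ) :
    Real.Gamma (z + k) = (∏ m ∈ Finset.range k, (z + m)) * Real.Gamma z := by
  induction k with
  | zero => simp
  | succ k ih =>
    have h1 : z + (k + 1 : ℕ) = (z + k) + 1 := by push_cast; ring
    rw [h1, Real.Gamma_add_one (by positivity), ih, Finset.prod_range_succ]
    push_cast
    ring

lemma moment_eq {z : ℝ} (hz : 0 < z) (k : ℕ) :
    ∫ t : ℝ, t ^ k *
        (Set.indicator (Set.Ici (0:ℝ)) (fun t => t ^ (z - 1) * Real.exp (-t)) t / Real.Gamma z)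
      = ∏ m ∈ Finset.range k, (z + m) := by
  have hfun : (fun t : ℝ => t ^ k *
        (Set.indicator (Set.Ici (0:ℝ)) (fun t => t ^ (z - 1) * Real.exp (-t)) t / Real.Gamma z))
      = fun t => (Set.indicator (Set.Ici (0:ℝ))
        (fun t => t ^ k * (t ^ (z - 1) * Real.exp (-t))) t) / Real.Gamma z := by
    funext t
    by_cases ht : t ∈ Set.Ici (0:ℝ)
    · simp only [Set.indicator_of_mem ht]; ring
    · simp [Set.indicator_of_notMem ht]
  rw [hfun, integral_div, integral_indicator measurableSet_Ici,
    MeasureTheory.integral_Ici_eq_integral_Ioi]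
  have hcong : ∫ t in Set.Ioi (0:ℝ), t ^ k * (t ^ (z - 1) * Real.exp (-t))
      = ∫ t in Set.Ioi (0:ℝ), Real.exp (-t) * t ^ (z + k - 1) := by
    refine setIntegral_congr_fun measurableSet_Ioi fun t ht => ?_
    have ht' : (0:ℝ) < t := ht
    rw [show z + (k:ℝ) - 1 = (k:ℝ) + (z - 1) by ring, Real.rpow_add ht', Real.rpow_natCast]
    ring
  rw [hcong, ← Real.Gamma_eq_integral (by positivity), Gamma_add_nat hz k,
    mul_div_assoc, div_self (ne_of_gt (Real.Gamma_pos_of_pos hz)), mul_one]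

lemma mom_integrable {z : ℝ} (hz : 0 < z) (k : ℕ) :
    Integrable (fun t : ℝ => t ^ k *
      (Set.indicator (Set.Ici (0:ℝ)) (fun t => t ^ (z - 1) * Real.exp (-t)) t / Real.Gamma z)) := by
  have hfun : (fun t : ℝ => t ^ k *
        (Set.indicator (Set.Ici (0:ℝ)) (fun t => t ^ (z - 1) * Real.exp (-t)) t / Real.Gamma z))
      = fun t => (Set.indicator (Set.Ici (0:ℝ))
        (fun t => t ^ k * (t ^ (z - 1) * Real.exp (-t))) t) / Real.Gamma z := by
    funext t
    by_cases ht : t ∈ Set.Ici (0:ℝ)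
    · simp only [Set.indicator_of_mem ht]; ring
    · simp [Set.indicator_of_notMem ht]
  rw [hfun]
  refine Integrable.div_const ?_ _
  rw [integrable_indicator_iff measurableSet_Ici, MeasureTheory.IntegrableOn,
    Measure.restrict_congr_set (Filter.EventuallyEq.symm MeasureTheory.Ioi_ae_eq_Ici)]
  exact mom_integrableOn hz k

lemma det_moments {N : ℕ} (v : Fin N → ℝ) :
    (Matrix.of fun j k : Fin N => ∏ m ∈ Finset.range (j:ℕ), (v k + m)).det
      = (Matrix.vandermonde v).det := by
  set p : Fin N → ℝ[X] := fun j => ∏ m ∈ Finset.range (j:ℕ), (X + C (m:ℝ)) with hp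
  have hmonic : ∀ j, (p j).Monic := fun j =>
    monic_prod_of_monic _ _ fun m _ => monic_X_add_C _
  have hdeg : ∀ j : Fin N, (p j).natDegree = (j:ℕ) := by
    intro j
    rw [hp]
    rw [Polynomial.natDegree_prod_of_monic _ _ fun m _ => monic_X_add_C _,
      Finset.sum_congr rfl fun i _ => Polynomial.natDegree_X_add_C ((i:ℕ):ℝ)]
    simp
  have heval : ∀ (k j : Fin N), (p j).eval (v k) = ∏ m ∈ Finset.range (j:ℕ), (v k + m) := by
    intro k j
    rw [hp]
    simp [eval_prod]
  rw [← Matrix.det_transpose]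
  have : (Matrix.of fun j k : Fin N => ∏ m ∈ Finset.range (j:ℕ), (v k + m)).transpose
      = Matrix.of fun k j : Fin N => (p j).eval (v k) := by
    ext k j
    simp [Matrix.transpose_apply, heval]
  rw [this, ← Matrix.det_eval_matrixOfPolynomials_eq_det_vandermonde v p hdeg hmonic]

/-! ### Symmetrization -/

lemma measurable_chamber {N : ℕ} (σ : Equiv.Perm (Fin N)) :
    MeasurableSet {x : Fin N → ℝ | Monotone (x ∘ σ)} := by
  have h : {x : Fin N → ℝ | Monotone (x ∘ σ)}
      = ⋂ (i : Fin N) (j : Fin N) (_ : i ≤ j), {x : Fin N → ℝ | x (σ i) ≤ x (σ j)} := by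
    ext x
    simp only [Set.mem_setOf_eq, Set.mem_iInter, Monotone, Function.comp_apply]
  rw [h]
  exact MeasurableSet.iInter fun i => MeasurableSet.iInter fun j => MeasurableSet.iInter fun _ =>
    measurableSet_le (measurable_pi_apply _) (measurable_pi_apply _)

lemma measurable_mono {N : ℕ} : MeasurableSet {x : Fin N → ℝ | Monotone x} := by
  have h : {x : Fin N → ℝ | Monotone x}
      = ⋂ (i : Fin N) (j : Fin N) (_ : i ≤ j), {x : Fin N → ℝ | x i ≤ x j} := by
    ext x
    simp only [Set.mem_setOf_eq, Set.mem_iInter, Monotone]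
  rw [h]
  exact MeasurableSet.iInter fun i => MeasurableSet.iInter fun j => MeasurableSet.iInter fun _ =>
    measurableSet_le (measurable_pi_apply _) (measurable_pi_apply _)

lemma hyperplane_null {N : ℕ} (i j : Fin N) (hij : i ≠ j) :
    volume {x : Fin N → ℝ | x i = x j} = 0 := by
  set L : (Fin N → ℝ) →ₗ[ℝ] ℝ := (LinearMap.proj i : (Fin N → ℝ) →ₗ[ℝ] ℝ)
    - (LinearMap.proj j : (Fin N → ℝ) →ₗ[ℝ] ℝ) with hL
  have hker : {x : Fin N → ℝ | x i = x j} = (LinearMap.ker L : Set (Fin N → ℝ)) := by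
    ext x
    simp [hL, LinearMap.mem_ker, sub_eq_zero, LinearMap.proj]
  rw [hker]
  refine MeasureTheory.Measure.addHaar_submodule _ _ fun htop => ?_
  have h1 : Pi.single i (1:ℝ) ∈ LinearMap.ker L := htop ▸ Submodule.mem_top
  rw [LinearMap.mem_ker] at h1
  simp [hL, LinearMap.proj, Pi.single_eq_same, Pi.single_eq_of_ne (Ne.symm hij)] at h1

lemma tie_null {N : ℕ} : volume (⋃ (i : Fin N) (j : Fin N) (_ : i ≠ j),
    {x : Fin N → ℝ | x i = x j}) = 0 :=
  measure_iUnion_null fun i => measure_iUnion_null fun j => measure_iUnion_null fun hij =>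
    hyperplane_null i j hij

lemma sort_unique {N : ℕ} {x : Fin N → ℝ} (hinj : Function.Injective x)
    {σ τ : Equiv.Perm (Fin N)}
    (hσ : Monotone (x ∘ σ)) (hτ : Monotone (x ∘ τ)) : σ = τ := by
  have sm1 : StrictMono (x ∘ σ) := hσ.strictMono_of_injective (hinj.comp σ.injective)
  have sm2 : StrictMono (x ∘ τ) := hτ.strictMono_of_injective (hinj.comp τ.injective)
  have hr : Set.range (x ∘ σ) = Set.range (x ∘ τ) := by
    rw [Set.range_comp, Set.range_comp, σ.surjective.range_eq, τ.surjective.range_eq]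
  have heq : x ∘ σ = x ∘ τ := (StrictMono.range_inj sm1 sm2).mp hr
  exact Equiv.ext fun i => hinj (congrFun heq i)

open Function in
lemma chamber_aedisjoint {N : ℕ} :
    Pairwise (MeasureTheory.AEDisjoint volume on
      fun σ : Equiv.Perm (Fin N) => {x : Fin N → ℝ | Monotone (x ∘ σ)}) := by
  intro σ τ hστ
  refine measure_mono_null ?_ tie_null
  rintro x ⟨h1, h2⟩
  by_contra hx
  simp only [Set.mem_iUnion, not_exists, Set.mem_setOf_eq] at hx
  have hinj : Function.Injective x := fun a b hab => by
    by_contra hne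
    exact hx a b hne hab
  exact hστ (sort_unique hinj h1 h2)

lemma chamber_cover {N : ℕ} : (⋃ σ : Equiv.Perm (Fin N),
    {x : Fin N → ℝ | Monotone (x ∘ σ)}) = Set.univ :=
  Set.eq_univ_of_forall fun x => Set.mem_iUnion.2 ⟨Tuple.sort x, Tuple.monotone_sort x⟩

lemma comp_perm_mp {N : ℕ} (σ : Equiv.Perm (Fin N)) :
    MeasurePreserving (fun x : Fin N → ℝ => x ∘ σ) volume volume ∧
      MeasurableEmbedding (fun x : Fin N → ℝ => x ∘ σ) := by
  have h : (fun x : Fin N → ℝ => x ∘ σ)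
      = ⇑(MeasurableEquiv.piCongrLeft (fun _ : Fin N => ℝ) σ.symm) := by
    funext x
    funext b
    rw [MeasurableEquiv.coe_piCongrLeft]
    simpa using (Equiv.piCongrLeft_apply_apply (fun _ : Fin N => ℝ) σ.symm x (σ b)).symm
  constructor
  · rw [h]; exact MeasureTheory.volume_measurePreserving_piCongrLeft _ _
  · rw [h]; exact (MeasurableEquiv.piCongrLeft (fun _ : Fin N => ℝ) σ.symm).measurableEmbedding

lemma setIntegral_chamber {N : ℕ} (F : (Fin N → ℝ) → ℝ)
    (hsym : ∀ (σ : Equiv.Perm (Fin N)) (x : Fin N → ℝ), F (x ∘ σ) = F x)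
    (σ : Equiv.Perm (Fin N)) :
    ∫ x in {x : Fin N → ℝ | Monotone (x ∘ σ)}, F x
      = ∫ x in {x : Fin N → ℝ | Monotone x}, F x := by
  obtain ⟨hmp, hemb⟩ := comp_perm_mp (N := N) σ
  have key := hmp.setIntegral_preimage_emb hemb F {x : Fin N → ℝ | Monotone x}
  have hset : (fun x : Fin N → ℝ => x ∘ σ) ⁻¹' {x : Fin N → ℝ | Monotone x}
      = {x : Fin N → ℝ | Monotone (x ∘ σ)} := rfl
  rw [hset] at key
  rw [← key]
  exact setIntegral_congr_fun (measurable_chamber σ) fun x _ => (hsym σ x).symm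

lemma integral_eq_factorial_mul {N : ℕ} (F : (Fin N → ℝ) → ℝ) (hint : Integrable F)
    (hsym : ∀ (σ : Equiv.Perm (Fin N)) (x : Fin N → ℝ), F (x ∘ σ) = F x) :
    ∫ x : Fin N → ℝ, F x
      = (N.factorial : ℝ) * ∫ x in {x : Fin N → ℝ | Monotone x}, F x := by
  classical
  have h1 : ∫ x : Fin N → ℝ, F x
      = ∫ x in (⋃ σ : Equiv.Perm (Fin N), {x : Fin N → ℝ | Monotone (x ∘ σ)}), F x := by
    rw [chamber_cover, MeasureTheory.setIntegral_univ]
  rw [h1, integral_iUnion_ae (fun σ => (measurable_chamber σ).nullMeasurableSet)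
    chamber_aedisjoint hint.integrableOn, tsum_fintype]
  rw [Finset.sum_congr rfl fun σ _ => setIntegral_chamber F hsym σ]
  rw [Finset.sum_const, Finset.card_univ, Fintype.card_perm, Fintype.card_fin, nsmul_eq_mul]

/-! ### Main statement -/

/-- Vandermonde product `∏_{i<j} (x_j - x_i)`. -/
noncomputable def vanderProd {N : ℕ} (x : Fin N → ℝ) : ℝ :=
  ∏ i : Fin N, ∏ j ∈ Finset.Ioi i, (x j - x i)

theorem lambdaStar_markov_kernel (N : ℕ) (β : ℝ) (hβ : 0 < β)
    (y : Fin N → ℕ) (hy : StrictMono y) :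
    ∫ x in {x : Fin N → ℝ | (∀ i, 0 ≤ x i) ∧ Monotone x},
      (vanderProd x / vanderProd (fun i => (y i : ℝ))) *
        Matrix.det (Matrix.of fun i j : Fin N =>
          x i ^ ((y j : ℝ) + β - 1) * Real.exp (-x i) /
            Real.Gamma ((y j : ℝ) + β)) = 1 := by
  classical
  set z : Fin N → ℝ := fun k => (y k : ℝ) + β with hzdef
  have hz : ∀ k, 0 < z k := fun k => by positivity
  set f : Fin N → ℝ → ℝ := fun j t => t ^ (j : ℕ) with hfdef
  set g : Fin N → ℝ → ℝ := fun k t =>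
    Set.indicator (Set.Ici (0:ℝ)) (fun t => t ^ (z k - 1) * Real.exp (-t)) t
      / Real.Gamma (z k) with hgdef
  set F : (Fin N → ℝ) → ℝ := fun x =>
    (Matrix.of fun i j => f j (x i)).det * (Matrix.of fun i j => g j (x i)).det with hFdef
  have hprod : ∀ j k, Integrable (fun t => f j t * g k t) := fun j k =>
    mom_integrable (hz k) _
  set Δy : ℝ := vanderProd (fun i => (y i : ℝ)) with hΔdef
  have hΔpos : 0 < Δy := by
    rw [hΔdef]
    unfold vanderProd
    refine Finset.prod_pos fun i _ => Finset.prod_pos fun j hj => ?_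
    have hij : i < j := Finset.mem_Ioi.mp hj
    have := hy hij
    simp only [sub_pos]
    exact_mod_cast this
  -- symmetry of F
  have hsym : ∀ (σ : Equiv.Perm (Fin N)) (x : Fin N → ℝ), F (x ∘ σ) = F x := by
    intro σ x
    have e1 : (Matrix.of fun i j : Fin N => f j ((x ∘ σ) i))
        = (Matrix.of fun i j : Fin N => f j (x i)).submatrix σ id := rfl
    have e2 : (Matrix.of fun i j : Fin N => g j ((x ∘ σ) i))
        = (Matrix.of fun i j : Fin N => g j (x i)).submatrix σ id := rfl
    rw [hFdef]
    simp only []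
    rw [e1, e2, Matrix.det_permute, Matrix.det_permute]
    have hss := sgn_mul_self σ
    unfold sgn at hss
    linear_combination ((Matrix.of fun i j => f j (x i)).det *
      (Matrix.of fun i j => g j (x i)).det) * hss
  -- Andreief + moments
  have hA : ∀ j k : Fin N, ∫ t, f j t * g k t = ∏ m ∈ Finset.range (j:ℕ), (z k + m) :=
    fun j k => moment_eq (hz k) _
  have hdet : (Matrix.of fun j k : Fin N => ∫ t, f j t * g k t).det = Δy := by
    have e3 : (Matrix.of fun j k : Fin N => ∫ t, f j t * g k t)
        = Matrix.of fun j k : Fin N => ∏ m ∈ Finset.range (j:ℕ), (z k + m) := by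
      ext j k
      exact hA j k
    rw [e3, det_moments z, Matrix.det_vandermonde]
    rw [hΔdef]
    unfold vanderProd
    refine Finset.prod_congr rfl fun i _ => Finset.prod_congr rfl fun j _ => ?_
    rw [hzdef]
    ring
  have handr : ∫ x : Fin N → ℝ, F x = (N.factorial : ℝ) * Δy := by
    rw [hFdef]
    rw [andreief f g hprod, hdet]
  have hintF : Integrable F := integrable_detdet hprod
  have hMono : ∫ x in {x : Fin N → ℝ | Monotone x}, F x = Δy := by
    have hmain := integral_eq_factorial_mul F hintF hsym
    rw [handr] at hmain
    have hfact : (N.factorial : ℝ) ≠ 0 := Nat.cast_ne_zero.mpr (Nat.factorial_ne_zero N)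
    exact (mul_left_cancel₀ hfact hmain).symm
  -- restrict to nonnegative coordinates
  set S : Set (Fin N → ℝ) := {x : Fin N → ℝ | (∀ i, 0 ≤ x i) ∧ Monotone x} with hSdef
  have hSmeas : MeasurableSet S := by
    have : S = (⋂ i : Fin N, {x : Fin N → ℝ | 0 ≤ x i}) ∩ {x : Fin N → ℝ | Monotone x} := by
      ext x
      simp [hSdef, Set.mem_iInter, and_comm]
    rw [this]
    exact ((MeasurableSet.iInter fun i =>
      measurableSet_le measurable_const (measurable_pi_apply _))).inter measurable_mono
  have hCS : ∫ x in {x : Fin N → ℝ | Monotone x}, F x = ∫ x in S, F x := by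
    rw [← integral_indicator measurable_mono, ← integral_indicator hSmeas]
    congr 1
    funext x
    by_cases hm : Monotone x
    · by_cases hp : ∀ i, 0 ≤ x i
      · have hxS : x ∈ S := ⟨hp, hm⟩
        rw [Set.indicator_of_mem (show x ∈ {x : Fin N → ℝ | Monotone x} from hm), Set.indicator_of_mem hxS]
      · push_neg at hp
        obtain ⟨i, hi⟩ := hp
        have hFx : F x = 0 := by
          have hrow : ∀ j, (Matrix.of fun i j : Fin N => g j (x i)) i j = 0 := by
            intro j
            simp only [Matrix.of_apply, hgdef]
            rw [Set.indicator_of_notMem (by simpa using hi), zero_div]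
          rw [hFdef]
          simp only []
          rw [Matrix.det_eq_zero_of_row_eq_zero i hrow, mul_zero]
        have hxS : x ∉ S := fun h => absurd (h.1 i) (not_le.mpr hi)
        rw [Set.indicator_of_mem (show x ∈ {x : Fin N → ℝ | Monotone x} from hm),
          Set.indicator_of_notMem hxS, hFx]
    · have hxS : x ∉ S := fun h => hm h.2
      rw [Set.indicator_of_notMem (show x ∉ {x : Fin N → ℝ | Monotone x} from hm), Set.indicator_of_notMem hxS]
  -- final computation
  have hptwise : ∀ x ∈ S,
      (vanderProd x / Δy) *
        Matrix.det (Matrix.of fun i j : Fin N =>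
          x i ^ ((y j : ℝ) + β - 1) * Real.exp (-x i) / Real.Gamma ((y j : ℝ) + β))
      = F x / Δy := by
    intro x hx
    obtain ⟨hx0, _⟩ := hx
    have hv : vanderProd x = (Matrix.of fun i j : Fin N => f j (x i)).det := by
      rw [show (Matrix.of fun i j : Fin N => f j (x i)) = Matrix.vandermonde x from rfl,
        Matrix.det_vandermonde]
      rfl
    have hGmat : (Matrix.of fun i j : Fin N =>
          x i ^ ((y j : ℝ) + β - 1) * Real.exp (-x i) / Real.Gamma ((y j : ℝ) + β))
        = Matrix.of fun i j : Fin N => g j (x i) := by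
      ext i j
      simp only [Matrix.of_apply, hgdef, hzdef]
      rw [Set.indicator_of_mem (show x i ∈ Set.Ici (0:ℝ) from hx0 i)]
    rw [hGmat, hv, hFdef]
    simp only []
    ring
  rw [setIntegral_congr_fun hSmeas hptwise]
  rw [integral_div, ← hCS, hMono, div_self (ne_of_gt hΔpos)]
end

section
/- The kernel K(z,w) = e^{zw} on ℝ × ℝ is totally positive: for any z_1 < z_2 < ⋯ < z_N and w_1 < w_2 < ⋯ < w_N, det(e^{z_i w_j})_{i,j=1}^N > 0. -/
open Real Finset

private lemma exp_sum_zero : ∀ (N : ℕ) (w c x : Fin N → ℝ), StrictMono w → StrictMono x →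
    (∀ i, ∑ j, c j * Real.exp (w j * x i) = 0) → ∀ j, c j = 0 := by
  intro N
  induction N with
  | zero => intro _ _ _ _ _ _ j; exact j.elim0
  | succ N ih =>
    intro w c x hw hx hzero
    set d : Fin (N + 1) → ℝ := fun j => w j - w 0 with hd
    set g : ℝ → ℝ := fun t => ∑ j, c j * Real.exp (d j * t) with hgdef
    have hg : ∀ i, g (x i) = 0 := by
      intro i
      have h1 : g (x i) = (∑ j, c j * Real.exp (w j * x i)) * Real.exp (-(w 0) * x i) := by
        rw [Finset.sum_mul]
        refine Finset.sum_congr rfl fun j _ => ?_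
        rw [mul_assoc, ← Real.exp_add]
        congr 1
        simp only [hd]; congr 1; ring
      rw [h1, hzero, zero_mul]
    have hderiv : ∀ t : ℝ, HasDerivAt g (∑ j, (c j * d j) * Real.exp (d j * t)) t := by
      intro t
      have : HasDerivAt g (∑ j, c j * (Real.exp (d j * t) * d j)) t := by
        apply HasDerivAt.fun_sum
        intro j _
        simpa using (((hasDerivAt_id t).const_mul (d j)).exp).const_mul (c j)
      convert this using 1
      refine Finset.sum_congr rfl fun j _ => ?_
      ring
    have hroll : ∀ i : Fin N, ∃ ξ ∈ Set.Ioo (x i.castSucc) (x i.succ),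
        (∑ j, (c j * d j) * Real.exp (d j * ξ)) = 0 := by
      intro i
      exact exists_hasDerivAt_eq_zero (hx (Fin.castSucc_lt_succ (i := i)))
        (fun t _ => (hderiv t).continuousAt.continuousWithinAt)
        ((hg i.castSucc).trans (hg i.succ).symm)
        (fun t _ => hderiv t)
    choose ξ hξmem hξ0 using hroll
    have hξmono : StrictMono ξ := by
      intro i j hij
      calc ξ i < x i.succ := (hξmem i).2
        _ ≤ x j.castSucc := by
          rcases eq_or_lt_of_le (Fin.succ_le_castSucc_iff.mpr hij) with h | h
          · rw [h]
          · exact (hx h).le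
        _ < ξ j := (hξmem j).1
    have hsucc : ∀ j : Fin N, c j.succ * d j.succ = 0 := by
      have hw' : StrictMono (fun j : Fin N => d j.succ) := by
        intro a b hab
        simp only [hd]
        have := hw (Fin.succ_lt_succ_iff.mpr hab)
        linarith
      refine ih (fun j => d j.succ) (fun j => c j.succ * d j.succ) ξ hw' hξmono ?_
      intro i
      have h0 := hξ0 i
      rw [Fin.sum_univ_succ] at h0
      have hd0 : d 0 = 0 := by simp [hd]
      rw [hd0] at h0
      simpa using h0
    have hcsucc : ∀ j : Fin N, c j.succ = 0 := by
      intro j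
      have hdpos : 0 < d j.succ := by
        have := hw (Fin.succ_pos j)
        simp only [hd]; linarith
      have := hsucc j
      rcases mul_eq_zero.mp this with h | h
      · exact h
      · exact absurd h hdpos.ne'
    have hc0 : c 0 = 0 := by
      have h := hzero 0
      rw [Fin.sum_univ_succ] at h
      have : ∀ j : Fin N, c j.succ * Real.exp (w j.succ * x 0) = 0 := by
        intro j; rw [hcsucc j, zero_mul]
      rw [Finset.sum_congr rfl (fun j _ => this j)] at h
      simp only [Finset.sum_const_zero, add_zero] at h
      exact (mul_eq_zero.mp h).resolve_right (Real.exp_ne_zero _)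
    intro j
    refine Fin.cases hc0 hcsucc j

private lemma exp_kernel_det_ne_zero (N : ℕ) (z w : Fin N → ℝ)
    (hz : StrictMono z) (hw : StrictMono w) :
    Matrix.det (Matrix.of fun i j : Fin N => Real.exp (z i * w j)) ≠ 0 := by
  intro h
  obtain ⟨v, hv0, hMv⟩ := Matrix.exists_mulVec_eq_zero_iff.mpr h
  apply hv0
  funext j
  refine exp_sum_zero N w v z hw hz ?_ j
  intro i
  have := congrFun hMv i
  simpa [Matrix.mulVec, dotProduct, mul_comm] using this

theorem exp_kernel_totally_positive (N : ℕ) (z w : Fin N → ℝ)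
    (hz : StrictMono z) (hw : StrictMono w) :
    0 < Matrix.det (Matrix.of fun i j : Fin N => Real.exp (z i * w j)) := by
  set F : ℝ → ℝ := fun t =>
    Matrix.det (Matrix.of fun i j : Fin N =>
      Real.exp (z i * ((1 - t) * w j + t * (j : ℝ)))) with hF
  have hwt : ∀ t ∈ Set.Icc (0 : ℝ) 1,
      StrictMono (fun j : Fin N => (1 - t) * w j + t * (j : ℝ)) := by
    intro t ht j k hjk
    rcases eq_or_lt_of_le ht.1 with h0 | h0
    · simp only [← h0, sub_zero, one_mul, zero_mul, add_zero]
      exact hw hjk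
    · have h1 : (1 - t) * w j ≤ (1 - t) * w k :=
        mul_le_mul_of_nonneg_left (hw hjk).le (by linarith [ht.2])
      have h2 : t * (j : ℝ) < t * (k : ℝ) := by
        have : (j : ℝ) < (k : ℝ) := by exact_mod_cast hjk
        exact mul_lt_mul_of_pos_left this h0
      show (1 - t) * w j + t * (j : ℝ) < (1 - t) * w k + t * (k : ℝ)
      linarith
  have hFne : ∀ t ∈ Set.Icc (0 : ℝ) 1, F t ≠ 0 := fun t ht =>
    exp_kernel_det_ne_zero N z _ hz (hwt t ht)
  have hFcont : Continuous F := by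
    apply Continuous.matrix_det
    apply continuous_matrix
    intro i j
    show Continuous fun t => Real.exp (z i * ((1 - t) * w j + t * (j : ℝ)))
    fun_prop
  have hF1 : 0 < F 1 := by
    have : F 1 = Matrix.det (Matrix.vandermonde fun i => Real.exp (z i)) := by
      simp only [hF]
      congr 1
      ext i j
      simp only [Matrix.of_apply, Matrix.vandermonde_apply, sub_self, zero_mul, one_mul,
        zero_add]
      rw [mul_comm, Real.exp_nat_mul]
    rw [this, Matrix.det_vandermonde]
    apply Finset.prod_pos
    intro i _
    apply Finset.prod_pos
    intro j hj
    have : i < j := Finset.mem_Ioi.mp hj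
    have := Real.exp_lt_exp.mpr (hz this)
    linarith
  have hF0 : F 0 = Matrix.det (Matrix.of fun i j : Fin N => Real.exp (z i * w j)) := by
    simp [hF]
  have h0pos : 0 < F 0 := by
    by_contra hle
    push_neg at hle
    have hne := hFne 0 (Set.mem_Icc.mpr ⟨le_refl 0, zero_le_one⟩)
    have hlt : F 0 < 0 := lt_of_le_of_ne hle hne
    have := intermediate_value_Icc (zero_le_one (α := ℝ)) hFcont.continuousOn
    have h0mem : (0 : ℝ) ∈ Set.Icc (F 0) (F 1) := ⟨hlt.le, hF1.le⟩
    obtain ⟨t, ht, hFt⟩ := this h0mem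
    exact hFne t ht hFt
  rwa [hF0] at h0pos
end

section
/- Andreif (continuous Cauchy–Binet) identity: if f_1,…,f_N and g_1,…,g_N are measurable functions on a measure space (E, μ) with all products f_i g_j integrable, then ∫_{E^N} det(f_i(z_j))_{i,j=1}^N det(g_i(z_j))_{i,j=1}^N dμ(z_1)⋯dμ(z_N) = N! · det(∫_E f_i(z) g_j(z) dμ(z))_{i,j=1}^N. -/
open MeasureTheory

theorem andreif_identity {E : Type*} [MeasurableSpace E] (μ : Measure E)
    [SigmaFinite μ] (N : ℕ) (f g : Fin N → E → ℝ)
    (hfm : ∀ i, Measurable (f i)) (hgm : ∀ i, Measurable (g i))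
    (hint : ∀ i j, Integrable (fun z => f i z * g j z) μ) :
    (∫ z : Fin N → E,
        Matrix.det (Matrix.of fun i j : Fin N => f i (z j)) *
          Matrix.det (Matrix.of fun i j : Fin N => g i (z j))
        ∂(Measure.pi fun _ => μ)) =
      (N.factorial : ℝ) *
        Matrix.det (Matrix.of fun i j : Fin N => ∫ z, f i z * g j z ∂μ) := by
  classical
  letI : MeasureSpace E := ⟨μ⟩
  set c : Equiv.Perm (Fin N) → ℝ := fun σ => ((Equiv.Perm.sign σ : ℤ) : ℝ) with hc
  have key : ∀ z : Fin N → E,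
      Matrix.det (Matrix.of fun i j : Fin N => f i (z j)) *
        Matrix.det (Matrix.of fun i j : Fin N => g i (z j)) =
      ∑ σ : Equiv.Perm (Fin N), ∑ τ : Equiv.Perm (Fin N),
        (c σ * c τ) * ∏ i, f (σ i) (z i) * g (τ i) (z i) := by
    intro z
    rw [Matrix.det_apply, Matrix.det_apply, Finset.sum_mul_sum]
    refine Finset.sum_congr rfl fun σ _ => Finset.sum_congr rfl fun τ _ => ?_
    simp only [Matrix.of_apply, Units.smul_def, zsmul_eq_mul, hc, Finset.prod_mul_distrib]
    push_cast
    ring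
  have hterm : ∀ σ τ : Equiv.Perm (Fin N),
      Integrable (fun z : Fin N → E => ∏ i, f (σ i) (z i) * g (τ i) (z i))
        (Measure.pi fun _ => μ) :=
    fun σ τ => Integrable.fintype_prod (f := fun i x => f (σ i) x * g (τ i) x)
      (fun i => hint (σ i) (τ i))
  calc
    (∫ z : Fin N → E,
        Matrix.det (Matrix.of fun i j : Fin N => f i (z j)) *
          Matrix.det (Matrix.of fun i j : Fin N => g i (z j))
        ∂(Measure.pi fun _ => μ))
      = ∫ z : Fin N → E, ∑ σ : Equiv.Perm (Fin N), ∑ τ : Equiv.Perm (Fin N),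
          (c σ * c τ) * ∏ i, f (σ i) (z i) * g (τ i) (z i) ∂(Measure.pi fun _ => μ) := by
        simp_rw [key]
    _ = ∑ σ : Equiv.Perm (Fin N), ∑ τ : Equiv.Perm (Fin N),
          (c σ * c τ) * ∫ z : Fin N → E, ∏ i, f (σ i) (z i) * g (τ i) (z i)
            ∂(Measure.pi fun _ => μ) := by
        rw [integral_finset_sum]
        · refine Finset.sum_congr rfl fun σ _ => ?_
          rw [integral_finset_sum]
          · exact Finset.sum_congr rfl fun τ _ => integral_const_mul _ _
          · exact fun τ _ => (hterm σ τ).const_mul _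
        · exact fun σ _ => integrable_finset_sum _ fun τ _ => (hterm σ τ).const_mul _
    _ = ∑ σ : Equiv.Perm (Fin N), ∑ τ : Equiv.Perm (Fin N),
          (c σ * c τ) * ∏ i, ∫ z, f (σ i) z * g (τ i) z ∂μ := by
        refine Finset.sum_congr rfl fun σ _ => Finset.sum_congr rfl fun τ _ => ?_
        congr 1
        exact MeasureTheory.integral_fintype_prod_eq_prod
          (fun i x => f (σ i) x * g (τ i) x)
    _ = (N.factorial : ℝ) *
        Matrix.det (Matrix.of fun i j : Fin N => ∫ z, f i z * g j z ∂μ) := by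
        have hD : Matrix.det (Matrix.of fun i j : Fin N => ∫ z, f i z * g j z ∂μ)
            = ∑ ρ : Equiv.Perm (Fin N), c ρ * ∏ i, ∫ z, f i z * g (ρ i) z ∂μ := by
          rw [← Matrix.det_transpose, Matrix.det_apply]
          refine Finset.sum_congr rfl fun ρ _ => ?_
          simp [hc, Units.smul_def, zsmul_eq_mul, Matrix.transpose_apply]
        have hrow : ∀ σ : Equiv.Perm (Fin N),
            (∑ τ : Equiv.Perm (Fin N), (c σ * c τ) * ∏ i, ∫ z, f (σ i) z * g (τ i) z ∂μ)
            = Matrix.det (Matrix.of fun i j : Fin N => ∫ z, f i z * g j z ∂μ) := by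
          intro σ
          rw [hD, ← Equiv.sum_comp (Equiv.mulRight σ)]
          refine Finset.sum_congr rfl fun ρ _ => ?_
          have h1 : (∏ i, ∫ z, f (σ i) z * g (ρ (σ i)) z ∂μ)
              = ∏ i, ∫ z, f i z * g (ρ i) z ∂μ :=
            Equiv.prod_comp σ (fun k => ∫ z, f k z * g (ρ k) z ∂μ)
          have hs : ((Equiv.Perm.sign σ : ℤ) : ℝ) * ((Equiv.Perm.sign σ : ℤ) : ℝ) = 1 := by
            rcases Int.units_eq_one_or (Equiv.Perm.sign σ) with h | h <;> norm_num [h]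
          have h2 : c σ * c (ρ * σ) = c ρ := by
            simp only [hc, Equiv.Perm.sign_mul]
            push_cast
            linear_combination ((Equiv.Perm.sign ρ : ℤ) : ℝ) * hs
          show c σ * c (ρ * σ) * ∏ i, ∫ z, f (σ i) z * g (ρ (σ i)) z ∂μ
              = c ρ * ∏ i, ∫ z, f i z * g (ρ i) z ∂μ
          rw [h2, h1]
        simp_rw [hrow]
        rw [Finset.sum_const, nsmul_eq_mul]
        congr 1
        simp [Fintype.card_perm]
end
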